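/- Let X be a well-order, let α be a well-order with least element 0_α, and let (f_n) be a strictly descending sequence in α^X. Suppose x ∈ X is neither the least element of X nor the immediate successor of any element of X, and suppose the set {f_n^x : n ∈ ℕ} is finite. Then there exists y ∈ X with y <_X x such that the set {f_n^y : n ∈ ℕ} is finite. -/

import Mathlib

variable {X α : Type*}

/-- The lexicographic order on `α^X` (finite sequences of pairs):
`σ < τ` iff `τ` strictly extends `σ`, or at the least index `i` where they differ,
writing `(b, a) := σ_i` and `(b', a') := τ_i`, we have `b < b'` or (`b = b'` and `a < a'`). -/
def ExpLt [LT X] [LT α] (σ τ : List (X × α)) : Prop :=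
  (σ ≠ τ ∧ σ <+: τ) ∨
  ∃ (i : ℕ) (b : X) (a : α) (b' : X) (a' : α),
    σ[i]? = some (b, a) ∧ τ[i]? = some (b', a') ∧
    (∀ j, j < i → σ[j]? = τ[j]?) ∧ (b, a) ≠ (b', a') ∧
    (b < b' ∨ (b = b' ∧ a < a'))

/-- The underlying set of the exponentiation `α^X`: finite sequences
`⟨(b_0, a_0), …, (b_{n-1}, a_{n-1})⟩` with all `a_i ≠ 0_α = ⊥` and
`b_0 >_X b_1 >_X … >_X b_{n-1}`. -/
def ExpSet (X α : Type*) [LT X] [LE α] [OrderBot α] : Set (List (X × α)) :=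
  {l | (∀ p ∈ l, p.2 ≠ ⊥) ∧ l.Chain' (fun p q => q.1 < p.1)}

/-- The non-strict order on `α^X`: `σ ≤ τ` iff `σ < τ` or `σ = τ`. -/
def ExpLe [LT X] [LT α] (σ τ : List (X × α)) : Prop :=
  ExpLt σ τ ∨ σ = τ

/-- `g^x`: the sequence obtained from `g` by removing all pairs `(y, a)` with `y <_X x`. -/
def restrictAbove [LinearOrder X] (x : X) (g : List (X × α)) : List (X × α) :=
  g.filter (fun p => decide (¬ p.1 < x))

/-- `g(x)`: the unique `a` with `(x, a) ∈ g` if it exists, and `0_α = ⊥` otherwise. -/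
def eval [LinearOrder X] [LE α] [OrderBot α] (g : List (X × α)) (x : X) : α :=
  ((g.find? (fun p => decide (p.1 = x))).map Prod.snd).getD ⊥

section AuxLemmas
variable [LinearOrder X] [LinearOrder α]

/-- The lexicographic pair order. -/
def PairLt : (X × α) → (X × α) → Prop := fun p q => p.1 < q.1 ∨ (p.1 = q.1 ∧ p.2 < q.2)

lemma pairLt_irrefl (p : X × α) : ¬ PairLt p p := by
  rintro (h | ⟨-, h⟩) <;> exact lt_irrefl _ h

lemma pairLt_trans {p q s : X × α} (h1 : PairLt p q) (h2 : PairLt q s) : PairLt p s := by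
  rcases h1 with h1 | ⟨e1, h1⟩ <;> rcases h2 with h2 | ⟨e2, h2⟩
  · exact Or.inl (h1.trans h2)
  · exact Or.inl (e2 ▸ h1)
  · exact Or.inl (e1 ▸ h2)
  · exact Or.inr ⟨e1.trans e2, h1.trans h2⟩

lemma lex_trans {a b c : List (X × α)} (h1 : List.Lex PairLt a b) (h2 : List.Lex PairLt b c) :
    List.Lex PairLt a c := by
  induction h2 generalizing a with
  | nil => cases h1
  | @cons x l1 l2 h ih =>
    cases h1 with
    | nil => exact List.Lex.nil
    | rel h' => exact List.Lex.rel h'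
    | cons h' => exact List.Lex.cons (ih h')
  | @rel l1 l2 p q h =>
    cases h1 with
    | nil => exact List.Lex.nil
    | rel h' => exact List.Lex.rel (pairLt_trans h' h)
    | cons h' => exact List.Lex.rel h

lemma lex_asymm {a b : List (X × α)} (h1 : List.Lex PairLt a b) (h2 : List.Lex PairLt b a) :
    False := by
  induction h1 with
  | nil => cases h2
  | rel h => cases h2 with
    | rel h' => exact pairLt_irrefl _ (pairLt_trans h h')
    | cons h' => exact pairLt_irrefl _ h
  | cons h ih => cases h2 with
    | rel h' => exact pairLt_irrefl _ h'
    | cons h' => exact ih h'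

lemma lex_append_cancel {v a b : List (X × α)} (h : List.Lex PairLt (v ++ a) (v ++ b)) :
    List.Lex PairLt a b := by
  induction v with
  | nil => exact h
  | cons c v ih =>
    cases h with
    | rel h => exact absurd h (pairLt_irrefl c)
    | cons h => exact ih h

/-- `ExpLt` implies the lexicographic order. -/
lemma expLt_lex {σ τ : List (X × α)} (h : ExpLt σ τ) : List.Lex PairLt σ τ := by
  rcases h with ⟨hne, hpre⟩ | ⟨i, b, a, b', a', h1, h2, h3, h4, h5⟩
  · clear * - hne hpre
    induction σ generalizing τ with
    | nil =>
      cases τ with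
      | nil => exact absurd rfl hne
      | cons q t => exact List.Lex.nil
    | cons p s ih =>
      rcases τ with - | ⟨q, t⟩
      · exact absurd (List.prefix_nil.mp hpre) (by simp)
      · rw [List.cons_prefix_cons] at hpre
        obtain ⟨rfl, hpre⟩ := hpre
        exact List.Lex.cons (ih (fun e => hne (by rw [e])) hpre)
  · induction i generalizing σ τ with
    | zero =>
      rcases σ with - | ⟨p, s⟩; · simp at h1
      rcases τ with - | ⟨q, t⟩; · simp at h2
      simp only [List.getElem?_cons_zero, Option.some_inj] at h1 h2
      subst h1; subst h2
      refine List.Lex.rel ?_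
      rcases h5 with h5 | ⟨rfl, h5⟩
      · exact Or.inl h5
      · exact Or.inr ⟨rfl, h5⟩
    | succ i ih =>
      rcases σ with - | ⟨p, s⟩; · simp at h1
      rcases τ with - | ⟨q, t⟩; · simp at h2
      have h0 := h3 0 (Nat.succ_pos i)
      simp only [List.getElem?_cons_zero, Option.some_inj] at h0
      subst h0
      exact List.Lex.cons (ih h1 h2 (fun j hj => h3 (j + 1) (by omega)))

lemma filter_eq_nil_of_lt {x c : X} (hc : c < x) {l : List (X × α)}
    (hl : ∀ q ∈ l, q.1 < c) : l.filter (fun p => decide (¬ p.1 < x)) = [] := by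
  rw [List.filter_eq_nil_iff]
  intro p hp
  simp [(hl p hp).trans hc]

lemma restrict_filter_cons_pos {x : X} {p : X × α} {s : List (X × α)} (hp : ¬ p.1 < x) :
    (p :: s).filter (fun p => decide (¬ p.1 < x)) =
      p :: s.filter (fun p => decide (¬ p.1 < x)) := by
  rw [List.filter_cons_of_pos]
  simpa using hp

lemma restrict_filter_cons_neg {x : X} {p : X × α} {s : List (X × α)} (hp : p.1 < x) :
    (p :: s).filter (fun p => decide (¬ p.1 < x)) = s.filter (fun p => decide (¬ p.1 < x)) := by
  rw [List.filter_cons_of_neg]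
  simpa using hp

lemma filter_eq_takeWhile {x : X} {l : List (X × α)}
    (hl : l.Pairwise (fun p q => q.1 < p.1)) :
    l.filter (fun p => decide (¬ p.1 < x)) = l.takeWhile (fun p => decide (¬ p.1 < x)) := by
  induction l with
  | nil => rfl
  | cons p s ih =>
    rw [List.pairwise_cons] at hl
    by_cases hp : p.1 < x
    · rw [restrict_filter_cons_neg hp, filter_eq_nil_of_lt hp hl.1,
        List.takeWhile_cons_of_neg (by simpa using hp)]
    · rw [restrict_filter_cons_pos hp, List.takeWhile_cons_of_pos (by simpa using hp), ih hl.2]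

lemma restrict_mono (x : X) {σ τ : List (X × α)}
    (h : List.Lex PairLt σ τ)
    (hσ : σ.Pairwise (fun p q => q.1 < p.1)) (hτ : τ.Pairwise (fun p q => q.1 < p.1)) :
    restrictAbove x σ = restrictAbove x τ ∨
      List.Lex PairLt (restrictAbove x σ) (restrictAbove x τ) := by
  unfold restrictAbove
  induction h with
  | @nil q t =>
    rcases e : (q :: t).filter (fun p => decide (¬ p.1 < x)) with - | ⟨p, l⟩
    · left; rw [e]; rfl
    · right; rw [e]; simp only [List.filter_nil]; exact List.Lex.nil
  | @rel p s q t hpq =>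
    rw [List.pairwise_cons] at hσ hτ
    by_cases hp : p.1 < x
    · by_cases hq : q.1 < x
      · rw [restrict_filter_cons_neg hp, restrict_filter_cons_neg hq,
          filter_eq_nil_of_lt hp hσ.1, filter_eq_nil_of_lt hq hτ.1]
        exact Or.inl rfl
      · rw [restrict_filter_cons_neg hp, restrict_filter_cons_pos hq,
          filter_eq_nil_of_lt hp hσ.1]
        exact Or.inr List.Lex.nil
    · have hq : ¬ q.1 < x := by
        rcases hpq with h | ⟨e, -⟩
        · exact fun hq => hp (h.trans hq)
        · exact e ▸ hp
      rw [restrict_filter_cons_pos hp, restrict_filter_cons_pos hq]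
      exact Or.inr (List.Lex.rel hpq)
  | @cons p s t hst ih =>
    rw [List.pairwise_cons] at hσ hτ
    by_cases hp : p.1 < x
    · rw [restrict_filter_cons_neg hp, restrict_filter_cons_neg hp,
        filter_eq_nil_of_lt hp hσ.1, filter_eq_nil_of_lt hp hτ.1]
      exact Or.inl rfl
    · rw [restrict_filter_cons_pos hp, restrict_filter_cons_pos hp]
      rcases ih hσ.2 hτ.2 with h | h
      · exact Or.inl (by rw [h])
      · exact Or.inr (List.Lex.cons h)

lemma head_dropWhile_false {β : Type*} (p : β → Bool) :
    ∀ (l : List β) {a : β} {r : List β}, l.dropWhile p = a :: r → p a = false := by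
  intro l
  induction l with
  | nil => intro a r h; simp at h
  | cons b l ih =>
    intro a r h
    rw [List.dropWhile_cons] at h
    by_cases hb : p b = true
    · rw [if_pos hb] at h; exact ih h
    · rw [if_neg hb] at h
      cases h
      simpa using hb

end AuxLemmas

/-- Limit case: if `x ∈ X` is neither the least element of `X` nor the immediate
successor of any element of `X`, and, for a strictly descending sequence `(f_n)` in
`α^X`, the set `{f_n^x : n ∈ ℕ}` is finite, then there is `y <_X x` such that
`{f_n^y : n ∈ ℕ}` is finite. -/
theorem limit_case [LinearOrder X] [WellFoundedLT X]
    [LinearOrder α] [OrderBot α] [WellFoundedLT α]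
    (f : ℕ → List (X × α)) (hf : ∀ n, f n ∈ ExpSet X α)
    (hdesc : ∀ n, ExpLt (f (n + 1)) (f n))
    (x : X) (hnotleast : ¬ ∀ z : X, x ≤ z)
    (hnotsucc : ∀ y : X, ¬ (y < x ∧ ∀ z : X, y < z → x ≤ z))
    (hfin : (Set.range fun n => restrictAbove x (f n)).Finite) :
    ∃ y : X, y < x ∧ (Set.range fun n => restrictAbove y (f n)).Finite := by
  classical
  haveI : IsTrans (X × α) (fun p q : X × α => q.1 < p.1) := ⟨fun a b c h1 h2 => h2.trans h1⟩
  have hpw : ∀ n, (f n).Pairwise (fun p q : X × α => q.1 < p.1) := fun n =>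
    List.isChain_iff_pairwise.mp (hf n).2
  set g : ℕ → List (X × α) := fun n => restrictAbove x (f n) with hg
  have hlexf : ∀ n, List.Lex PairLt (f (n + 1)) (f n) := fun n => expLt_lex (hdesc n)
  have hstep : ∀ n, g (n + 1) = g n ∨ List.Lex PairLt (g (n + 1)) (g n) := fun n =>
    restrict_mono x (hlexf n) (hpw (n + 1)) (hpw n)
  have hmono : ∀ m n, m ≤ n → g n = g m ∨ List.Lex PairLt (g n) (g m) := by
    intro m n h
    induction n, h using Nat.le_induction with
    | base => exact Or.inl rfl
    | succ n hmn ih =>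
      rcases hstep n with h1 | h1
      · rw [h1]; exact ih
      · rcases ih with h2 | h2
        · rw [← h2]; exact Or.inr h1
        · exact Or.inr (lex_trans h1 h2)
  -- `g` is eventually constant
  haveI : Finite (Set.range g) := hfin.to_subtype
  obtain ⟨v, hv⟩ := Finite.exists_infinite_fiber
    (fun n => (⟨g n, Set.mem_range_self n⟩ : Set.range g))
  have hA : {n : ℕ | g n = (v : List (X × α))}.Infinite := by
    rw [← Set.infinite_coe_iff]
    have e : ((fun n => (⟨g n, Set.mem_range_self n⟩ : Set.range g)) ⁻¹' {v}) =
        {n : ℕ | g n = (v : List (X × α))} := by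
      ext n; simp [Subtype.ext_iff]
    rw [← e]
    exact hv
  obtain ⟨N, hN⟩ := hA.nonempty
  have hconst : ∀ n, N ≤ n → g n = g N := by
    intro n hn
    obtain ⟨m, hmA, hm⟩ := hA.exists_gt n
    have hmN : g m = g N := by rw [hmA, hN]
    rcases hmono N n hn with h1 | h1
    · exact h1
    · rcases hmono n m hm.le with h2 | h2
      · exact absurd (hmN ▸ h2 ▸ h1) (fun h => lex_asymm h h)
      · exact absurd (lex_trans h1 (hmN ▸ h2)) (fun h => lex_asymm h h)
  set v₀ : List (X × α) := g N with hv₀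
  have hvtake : ∀ n, N ≤ n → (f n).takeWhile (fun p => decide (¬ p.1 < x)) = v₀ := by
    intro n hn
    rw [← filter_eq_takeWhile (hpw n)]
    exact hconst n hn
  set t : ℕ → List (X × α) := fun n => (f n).dropWhile (fun p => decide (¬ p.1 < x)) with ht
  have hsplit : ∀ n, N ≤ n → f n = v₀ ++ t n := by
    intro n hn
    conv_lhs => rw [← List.takeWhile_append_dropWhile (p := fun p : X × α => decide (¬ p.1 < x))
      (l := f n)]
    rw [hvtake n hn]
  have hlext : ∀ n, N ≤ n → List.Lex PairLt (t (n + 1)) (t n) := by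
    intro n hn
    have h := hlexf n
    rw [hsplit (n + 1) (by omega), hsplit n hn] at h
    exact lex_append_cancel h
  have htne : ∀ n, N ≤ n → t n ≠ [] := by
    intro n hn h
    have h2 := hlext n hn
    rw [h] at h2
    exact (fun {l : List (X × α)} (hl : List.Lex PairLt l []) => by cases hl) h2
  have hhead : ∀ n, N ≤ n → ∃ p l, t n = p :: l ∧ p.1 < x ∧ ∀ q ∈ l, q.1 < p.1 := by
    intro n hn
    obtain ⟨p, l, e⟩ := List.exists_cons_of_ne_nil (htne n hn)
    refine ⟨p, l, e, ?_, ?_⟩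
    · have := head_dropWhile_false (fun p : X × α => decide (¬ p.1 < x)) (f n) (ht ▸ e)
      simpa using this
    · have hsub : (t n).Sublist (f n) := List.dropWhile_sublist _
      have hpair := (hpw n).sublist hsub
      rw [e, List.pairwise_cons] at hpair
      exact hpair.1
  obtain ⟨p0, l0, e0, hp0x, -⟩ := hhead N le_rfl
  have hheadle : ∀ k, ∀ p l, t (N + k) = p :: l → p.1 ≤ p0.1 := by
    intro k
    induction k with
    | zero =>
      intro p l e
      rw [Nat.add_zero, e0] at e
      cases e
      exact le_rfl
    | succ k ih =>
      intro p l e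
      obtain ⟨q, m, eq, -, -⟩ := hhead (N + k) (by omega)
      have hlex := hlext (N + k) (by omega)
      rw [eq, show N + k + 1 = N + (k + 1) from rfl, e] at hlex
      cases hlex with
      | rel h =>
        rcases h with h | ⟨h, -⟩
        · exact h.le.trans (ih q m eq)
        · exact h ▸ ih q m eq
      | cons h => exact ih _ _ eq
  have hbound : ∀ n, N ≤ n → ∀ q ∈ t n, q.1 ≤ p0.1 := by
    intro n hn q hq
    obtain ⟨k, rfl⟩ := Nat.le.dest hn
    obtain ⟨p, l, e, -, hl⟩ := hhead (N + k) (by omega)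
    rw [e, List.mem_cons] at hq
    rcases hq with rfl | hq
    · exact hheadle k _ _ e
    · exact (hl q hq).le.trans (hheadle k _ _ e)
  -- pick y with p0.1 < y < x
  have := hnotsucc p0.1
  push_neg at this
  obtain ⟨z, hz1, hz2⟩ := this hp0x
  refine ⟨z, hz2, ?_⟩
  have hval : ∀ n, N ≤ n → restrictAbove z (f n) = v₀ := by
    intro n hn
    rw [restrictAbove, hsplit n hn, List.filter_append]
    have h1 : v₀.filter (fun p => decide (¬ p.1 < z)) = v₀ := by
      rw [List.filter_eq_self]
      intro p hp
      rw [← hvtake N le_rfl] at hp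
      have := List.mem_takeWhile_imp hp
      simp only [decide_eq_true_eq] at this
      simp only [decide_eq_true_eq]
      exact fun h => this (h.trans hz2)
    have h2 : (t n).filter (fun p => decide (¬ p.1 < z)) = [] := by
      rw [List.filter_eq_nil_iff]
      intro q hq
      simp [lt_of_le_of_lt (hbound n hn q hq) hz1]
    rw [h1, h2, List.append_nil]
  apply Set.Finite.subset
    (Set.Finite.union ((Set.finite_Iic N).image (fun n => restrictAbove z (f n)))
      (Set.finite_singleton v₀))
  rintro - ⟨n, rfl⟩
  rcases le_or_gt N n with h | h
  · exact Or.inr (by simp [hval n h])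
  · exact Or.inl ⟨n, by simpa using h.le, rfl⟩
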